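/- Let t,k ≥ 3, let G be a (K_t,𝒯_k)-co-critical graph with critical coloring τ maximizing red edges, blue components D₁,…,D_p, and H := G minus all edges inside blue components. Suppose δ(H) ≤ 2t−5 and k ≥ t. Then for any vertex u of minimum degree in H, no edge of H[N_H(u)] is contained in every K_{t−2} subgraph of H[N_H(u)]. -/

import Mathlib

/-- A red/blue edge-coloring of `G`, given by its red subgraph `R ≤ G`, is a
critical coloring if the red graph is `K_t`-free and every component of the
blue graph `G \ R` has fewer than `k` vertices. -/
def IsCriticalColoring {V : Type*} (G R : SimpleGraph V) (t k : ℕ) : Prop :=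
  R ≤ G ∧ (∀ S : Finset V, ¬ R.IsNClique t S) ∧
    ∀ c : (G \ R).ConnectedComponent, c.supp.ncard < k

/-- `G` is `(K_t, 𝒯_k)`-co-critical. -/
def CoCritical {V : Type*} (G : SimpleGraph V) (t k : ℕ) : Prop :=
  G ≠ ⊤ ∧ (∃ R, IsCriticalColoring G R t k) ∧
    ∀ u v : V, u ≠ v → ¬ G.Adj u v →
      ∀ R, ¬ IsCriticalColoring (G ⊔ SimpleGraph.fromEdgeSet {s(u, v)}) R t k

/-- The spanning subgraph of `G` obtained by deleting all edges lying inside a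
single component of the blue graph `B`. -/
def Hgraph {V : Type*} (G B : SimpleGraph V) : SimpleGraph V where
  Adj u v := G.Adj u v ∧ B.connectedComponentMk u ≠ B.connectedComponentMk v
  symm := by
    constructor
    intro u v h
    exact ⟨h.1.symm, h.2.symm⟩
  loopless := by
    constructor
    intro u h
    exact h.2 rfl

open SimpleGraph

private lemma walkRel' {V : Type*} {B B' : SimpleGraph V} {s : Set V}
    (hs : ∀ a ∈ s, ∀ b, B.connectedComponentMk a = B.connectedComponentMk b → b ∈ s)
    (hadj : ∀ a b, B'.Adj a b →
      B.connectedComponentMk a = B.connectedComponentMk b ∨ (a ∈ s ∧ b ∈ s)) :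
    ∀ {a b : V}, B'.Walk a b →
      B.connectedComponentMk a = B.connectedComponentMk b ∨ (a ∈ s ∧ b ∈ s) := by
  intro a b wk
  induction wk with
  | nil => exact Or.inl rfl
  | cons h p ih =>
    rcases hadj _ _ h with h1 | h1
    · rcases ih with h2 | h2
      · exact Or.inl (h1.trans h2)
      · exact Or.inr ⟨hs _ h2.1 _ h1.symm, h2.2⟩
    · rcases ih with h2 | h2
      · exact Or.inr ⟨h1.1, hs _ h1.2 _ h2⟩
      · exact Or.inr ⟨h1.1, h2.2⟩

private lemma comp_bound' {V : Type*} [Fintype V] {k : ℕ} {B B' : SimpleGraph V} {s : Set V}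
    (hs : ∀ a ∈ s, ∀ b, B.connectedComponentMk a = B.connectedComponentMk b → b ∈ s)
    (hadj : ∀ a b, B'.Adj a b →
      B.connectedComponentMk a = B.connectedComponentMk b ∨ (a ∈ s ∧ b ∈ s))
    (hcomp : ∀ c : B.ConnectedComponent, c.supp.ncard < k)
    (c : B'.ConnectedComponent) (hbig : ¬ c.supp.ncard < k) : k ≤ s.ncard := by
  obtain ⟨x, rfl⟩ := c.exists_rep
  have key : ∀ y ∈ (B'.connectedComponentMk x).supp,
      B.connectedComponentMk y = B.connectedComponentMk x ∨ (y ∈ s ∧ x ∈ s) := by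
    intro y hy
    rw [ConnectedComponent.mem_supp_iff] at hy
    obtain ⟨wk⟩ := ConnectedComponent.eq.mp hy
    exact walkRel' hs hadj wk
  by_cases hx : x ∈ s
  · have hsub : (B'.connectedComponentMk x).supp ⊆ s := by
      intro y hy
      rcases key y hy with h | h
      · exact hs x hx y h.symm
      · exact h.1
    exact le_trans (not_lt.mp hbig) (Set.ncard_le_ncard hsub (Set.toFinite s))
  · exfalso
    apply hbig
    have hsub : (B'.connectedComponentMk x).supp ⊆ (B.connectedComponentMk x).supp := by
      intro y hy
      rcases key y hy with h | h
      · exact (ConnectedComponent.mem_supp_iff _ _).mpr h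
      · exact absurd h.2 hx
    exact lt_of_le_of_lt (Set.ncard_le_ncard hsub (Set.toFinite _)) (hcomp _)

private lemma fail_cases {V : Type*} {G' R' : SimpleGraph V} {t k : ℕ}
    (hfail : ¬ IsCriticalColoring G' R' t k) (hle : R' ≤ G') :
    (∃ S : Finset V, R'.IsNClique t S) ∨
      ∃ c : (G' \ R').ConnectedComponent, ¬ c.supp.ncard < k := by
  by_contra hc
  push_neg at hc
  exact hfail ⟨hle, hc.1, hc.2⟩

private lemma fail_analysis {V : Type*} [Fintype V] {t k : ℕ} {G R : SimpleGraph V}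
    (hR : IsCriticalColoring G R t k) (hG : CoCritical G t k)
    {x z : V} (hxz : x ≠ z) (hnadj : ¬ G.Adj x z)
    {H' : SimpleGraph V} (hle : H' ≤ G)
    {s : Set V}
    (hs : ∀ a ∈ s, ∀ b, (G \ R).connectedComponentMk a = (G \ R).connectedComponentMk b → b ∈ s)
    (hedge : ∀ a b, G.Adj a b → ¬ H'.Adj a b →
      (G \ R).connectedComponentMk a = (G \ R).connectedComponentMk b ∨ (a ∈ s ∧ b ∈ s)) :
    (∃ S : Finset V, (H' ⊔ SimpleGraph.fromEdgeSet {s(x, z)}).IsNClique t S) ∨ k ≤ s.ncard := by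
  have hfail := hG.2.2 x z hxz hnadj (H' ⊔ SimpleGraph.fromEdgeSet {s(x, z)})
  have hle' : H' ⊔ SimpleGraph.fromEdgeSet {s(x, z)} ≤ G ⊔ SimpleGraph.fromEdgeSet {s(x, z)} :=
    sup_le_sup_right hle _
  rcases fail_cases hfail hle' with h | ⟨c, hc⟩
  · exact Or.inl h
  · refine Or.inr (comp_bound' hs ?_ hR.2.2 c hc)
    intro a b hab
    have h1 : ¬ (H' ⊔ SimpleGraph.fromEdgeSet {s(x, z)}).Adj a b := hab.2
    have h3 : ¬ H'.Adj a b := fun hh => h1 (Or.inl hh)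
    have h2 : G.Adj a b := by
      rcases hab.1 with h | h
      · exact h
      · exact absurd (Or.inr h : (H' ⊔ SimpleGraph.fromEdgeSet {s(x, z)}).Adj a b) h1
    exact hedge a b h2 h3

private lemma extract {V : Type*} [DecidableEq V] {R H' : SimpleGraph V} {t : ℕ} (ht : 2 ≤ t)
    (hfree : ∀ S : Finset V, ¬ R.IsNClique t S) (hle : H' ≤ R)
    {x z : V} (hxz : x ≠ z) {S : Finset V}
    (hS : (H' ⊔ SimpleGraph.fromEdgeSet {s(x, z)}).IsNClique t S) :
    ∃ T : Finset V, H'.IsNClique (t - 2) T ∧ ∀ a ∈ T, H'.Adj x a ∧ H'.Adj z a := by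
  have hpair : ∀ a b : V, a ∈ S → b ∈ S → a ≠ b →
      H'.Adj a b ∨ ((a = x ∧ b = z) ∨ (a = z ∧ b = x)) := by
    intro a b ha hb hab
    rcases hS.1 (Finset.mem_coe.mpr ha) (Finset.mem_coe.mpr hb) hab with h | h
    · exact Or.inl h
    · right
      rw [SimpleGraph.fromEdgeSet_adj, Set.mem_singleton_iff] at h
      exact Sym2.eq_iff.mp h.1
  have hxS : x ∈ S := by
    by_contra hx
    refine hfree S ⟨?_, hS.2⟩
    intro a ha b hb hab
    rcases hpair a b (Finset.mem_coe.mp ha) (Finset.mem_coe.mp hb) hab with h | h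
    · exact hle h
    · exfalso
      rcases h with ⟨h1, -⟩ | ⟨-, h2⟩
      · exact hx (h1 ▸ Finset.mem_coe.mp ha)
      · exact hx (h2 ▸ Finset.mem_coe.mp hb)
  have hzS : z ∈ S := by
    by_contra hz
    refine hfree S ⟨?_, hS.2⟩
    intro a ha b hb hab
    rcases hpair a b (Finset.mem_coe.mp ha) (Finset.mem_coe.mp hb) hab with h | h
    · exact hle h
    · exfalso
      rcases h with ⟨-, h2⟩ | ⟨h1, -⟩
      · exact hz (h2 ▸ Finset.mem_coe.mp hb)
      · exact hz (h1 ▸ Finset.mem_coe.mp ha)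
  refine ⟨(S.erase x).erase z, ⟨?_, ?_⟩, ?_⟩
  · intro a ha b hb hab
    have ha' := Finset.mem_coe.mp ha
    have hb' := Finset.mem_coe.mp hb
    rw [Finset.mem_erase, Finset.mem_erase] at ha' hb'
    rcases hpair a b ha'.2.2 hb'.2.2 hab with h | h
    · exact h
    · exfalso
      rcases h with ⟨h1, -⟩ | ⟨h1, -⟩
      · exact ha'.2.1 h1
      · exact ha'.1 h1
  · have hz' : z ∈ S.erase x := Finset.mem_erase.mpr ⟨Ne.symm hxz, hzS⟩
    rw [Finset.card_erase_of_mem hz', Finset.card_erase_of_mem hxS, hS.2]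
    omega
  · intro a ha
    rw [Finset.mem_erase, Finset.mem_erase] at ha
    obtain ⟨haz, hax, haS⟩ := ha
    constructor
    · rcases hpair x a hxS haS (Ne.symm hax) with h | h
      · exact h
      · exfalso
        rcases h with ⟨-, h2⟩ | ⟨h1, -⟩
        · exact haz h2
        · exact hxz h1
    · rcases hpair z a hzS haS (Ne.symm haz) with h | h
      · exact h
      · exfalso
        rcases h with ⟨h1, -⟩ | ⟨-, h2⟩
        · exact hxz h1.symm
        · exact hax h2

open SimpleGraph

private lemma exists_nonedge {V : Type*} {G : SimpleGraph V} (h : G ≠ ⊤) :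
    ∃ x z : V, x ≠ z ∧ ¬ G.Adj x z := by
  by_contra hc
  push_neg at hc
  exact h (by
    ext a b
    simp only [SimpleGraph.top_adj]
    exact ⟨fun h' => h'.ne, fun h' => hc a b h'⟩)

private lemma surgery {V : Type*} [DecidableEq V] {G R : SimpleGraph V} {t : ℕ} (ht4 : 4 ≤ t)
    {u x z : V} (hxu : x ≠ u) (hzu : z ≠ u)
    (hA : ∀ y, y ≠ u →
      (G \ R).connectedComponentMk y ≠ (G \ R).connectedComponentMk u →
      (Hgraph G (G \ R)).Adj u y)
    {H' : SimpleGraph V} (hle : H' ≤ Hgraph G (G \ R))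
    {T : Finset V} (hTcl : H'.IsNClique (t - 2) T)
    (hTadj : ∀ a ∈ T, H'.Adj x a ∧ H'.Adj z a) :
    ∃ P : Finset V, ↑P ⊆ (Hgraph G (G \ R)).neighborSet u ∧
      (Hgraph G (G \ R)).IsNClique (t - 2) P ∧
      ∀ q ∈ P, q ∈ T ∨ ((q = x ∨ q = z) ∧ ∀ a ∈ T, H'.Adj q a) := by
  set B := G \ R with hB
  by_cases hcase : B.connectedComponentMk x = B.connectedComponentMk u ∧
      B.connectedComponentMk z = B.connectedComponentMk u
  · refine ⟨T, ?_, hTcl.mono hle, fun q hq => Or.inl hq⟩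
    intro a ha
    have haT := Finset.mem_coe.mp ha
    have h1 : (Hgraph G B).Adj x a := hle (hTadj a haT).1
    have h2 : B.connectedComponentMk a ≠ B.connectedComponentMk u := by
      intro heq
      exact h1.2 (hcase.1.trans heq.symm)
    have h3 : a ≠ u := by
      rintro rfl
      exact h1.2 hcase.1
    exact (hA a h3 h2 : (Hgraph G B).Adj u a)
  · obtain ⟨y, hyxz, hymk, hyu⟩ : ∃ y, (y = x ∨ y = z) ∧
        B.connectedComponentMk y ≠ B.connectedComponentMk u ∧ y ≠ u := by
      by_cases h : B.connectedComponentMk x = B.connectedComponentMk u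
      · refine ⟨z, Or.inr rfl, ?_, hzu⟩
        intro hz
        exact hcase ⟨h, hz⟩
      · exact ⟨x, Or.inl rfl, h, hxu⟩
    have hyadj : ∀ a ∈ T, H'.Adj y a := by
      intro a ha
      rcases hyxz with rfl | rfl
      · exact (hTadj a ha).1
      · exact (hTadj a ha).2
    by_cases hd : ∃ d ∈ T, B.connectedComponentMk d = B.connectedComponentMk u
    · obtain ⟨d, hdT, hdmk⟩ := hd
      have hyT : y ∉ T := fun hyT => (hyadj y hyT).ne rfl
      have hyE : y ∉ T.erase d := fun h => hyT (Finset.mem_of_mem_erase h)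
      have hEmk : ∀ a ∈ T.erase d,
          B.connectedComponentMk a ≠ B.connectedComponentMk u ∧ a ≠ u := by
        intro a ha
        obtain ⟨had, haT⟩ := Finset.mem_erase.mp ha
        have hmk : B.connectedComponentMk a ≠ B.connectedComponentMk u := by
          intro heq
          have hadj : (Hgraph G B).Adj a d :=
            hle (hTcl.1 (Finset.mem_coe.mpr haT) (Finset.mem_coe.mpr hdT) had)
          exact hadj.2 (heq.trans hdmk.symm)
        exact ⟨hmk, fun h => hmk (h ▸ rfl)⟩
      refine ⟨insert y (T.erase d), ?_, ⟨?_, ?_⟩, ?_⟩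
      · intro a ha
        have ha' := Finset.mem_coe.mp ha
        rcases Finset.mem_insert.mp ha' with rfl | ha''
        · exact (hA a hyu hymk : (Hgraph G B).Adj u a)
        · obtain ⟨hmk, hne⟩ := hEmk a ha''
          exact (hA a hne hmk : (Hgraph G B).Adj u a)
      · intro a ha b hb hab
        have ha' := Finset.mem_coe.mp ha
        have hb' := Finset.mem_coe.mp hb
        rcases Finset.mem_insert.mp ha' with rfl | ha'' <;>
          rcases Finset.mem_insert.mp hb' with h | hb''
        · exact absurd h.symm hab
        · exact hle (hyadj b (Finset.mem_of_mem_erase hb''))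
        · subst h
          exact (hle (hyadj a (Finset.mem_of_mem_erase ha''))).symm
        · exact hle (hTcl.1 (Finset.mem_coe.mpr (Finset.mem_of_mem_erase ha''))
            (Finset.mem_coe.mpr (Finset.mem_of_mem_erase hb'')) hab)
      · rw [Finset.card_insert_of_notMem hyE, Finset.card_erase_of_mem hdT, hTcl.2]
        omega
      · intro q hq
        rcases Finset.mem_insert.mp hq with rfl | hq'
        · exact Or.inr ⟨hyxz, hyadj⟩
        · exact Or.inl (Finset.mem_of_mem_erase hq')
    · push_neg at hd
      refine ⟨T, ?_, hTcl.mono hle, fun q hq => Or.inl hq⟩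
      intro a ha
      have haT := Finset.mem_coe.mp ha
      have hmk := hd a haT
      have hne : a ≠ u := fun h => hmk (h ▸ rfl)
      exact (hA a hne hmk : (Hgraph G B).Adj u a)

private lemma counting {V : Type*} [Fintype V] [DecidableEq V]
    {A s : Set V} {Q : Finset V} {v w : V} {t k δ : ℕ}
    (hsA : s ⊆ A) (hQA : ↑Q ⊆ A)
    (hQs : ∀ q ∈ Q, q ≠ v → q ≠ w → q ∉ s)
    (hvQ : v ∈ Q) (hwQ : w ∈ Q) (hvw : v ≠ w)
    (hQcard : Q.card = t - 2) (hks : k ≤ s.ncard) (hAcard : A.ncard = δ)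
    (hδ : δ ≤ 2 * t - 5) (ht4 : 4 ≤ t) (hkt : t ≤ k) : False := by
  set Q' : Finset V := (Q.erase v).erase w with hQ'
  have hQ'sub : ↑Q' ⊆ A := by
    intro a ha
    exact hQA (Finset.mem_coe.mpr
      (Finset.mem_of_mem_erase (Finset.mem_of_mem_erase (Finset.mem_coe.mp ha))))
  have hdisj : Disjoint s (↑Q' : Set V) := by
    rw [Set.disjoint_right]
    intro a ha
    have ha' := Finset.mem_coe.mp ha
    obtain ⟨haw, hav, haQ⟩ : a ≠ w ∧ a ≠ v ∧ a ∈ Q := by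
      obtain ⟨h1, h2⟩ := Finset.mem_erase.mp ha'
      obtain ⟨h3, h4⟩ := Finset.mem_erase.mp h2
      exact ⟨h1, h3, h4⟩
    exact hQs a haQ hav haw
  have hQ'card : Q'.card = t - 4 := by
    have hw' : w ∈ Q.erase v := Finset.mem_erase.mpr ⟨Ne.symm hvw, hwQ⟩
    rw [hQ', Finset.card_erase_of_mem hw', Finset.card_erase_of_mem hvQ, hQcard]
    omega
  have hunion : (s ∪ ↑Q').ncard = s.ncard + Q'.card := by
    rw [Set.ncard_union_eq hdisj (Set.toFinite s) (Set.toFinite _), Set.ncard_coe_finset]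
  have hle : (s ∪ ↑Q').ncard ≤ A.ncard :=
    Set.ncard_le_ncard (Set.union_subset hsA hQ'sub) (Set.toFinite A)
  omega


/-- with `R` a critical coloring of the co-critical graph `G`
maximizing red edges and `H` obtained by deleting all edges inside blue
components, if `δ(H) ≤ 2t - 5` and `k ≥ t`, then for every vertex `u` of minimum
degree in `H`, no edge of `H[N_H(u)]` lies in every `K_{t-2}` subgraph of
`H[N_H(u)]`. -/

theorem stmt_18 {V : Type*} [Fintype V] (t k : ℕ) (ht : 3 ≤ t) (hk : 3 ≤ k)
    (G : SimpleGraph V) (hG : CoCritical G t k)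
    (R : SimpleGraph V) (hR : IsCriticalColoring G R t k)
    (hmax : ∀ R' : SimpleGraph V, IsCriticalColoring G R' t k →
      R'.edgeSet.ncard ≤ R.edgeSet.ncard)
    (H : SimpleGraph V) (hH : H = Hgraph G (G \ R))
    (δ : ℕ) (hδlb : ∀ v : V, δ ≤ (H.neighborSet v).ncard)
    (hδmem : ∃ v : V, (H.neighborSet v).ncard = δ)
    (hδsmall : δ ≤ 2 * t - 5) (hkt : t ≤ k)
    (u : V) (humin : (H.neighborSet u).ncard = δ) :
    ∀ v w : V, H.Adj u v → H.Adj u w → H.Adj v w →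
      ∃ S : Finset V, ↑S ⊆ H.neighborSet u ∧ H.IsNClique (t - 2) S ∧
        ¬ (v ∈ S ∧ w ∈ S) := by
  classical
  subst hH
  intro v w huv huw hvw
  by_cases ht4 : 4 ≤ t
  swap
  · -- t = 3 : a single vertex suffices
    have ht3 : t = 3 := by omega
    subst ht3
    refine ⟨{v}, ?_, ⟨?_, ?_⟩, ?_⟩
    · intro a ha
      have : a = v := by simpa using ha
      subst this
      exact huv
    · intro a ha b hb hab
      exfalso
      have ha' : a = v := by simpa using ha
      have hb' : b = v := by simpa using hb
      exact hab (ha'.trans hb'.symm)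
    · simp
    · rintro ⟨-, hw⟩
      rw [Finset.mem_singleton] at hw
      exact hvw.ne hw.symm
  by_contra hcon
  push_neg at hcon
  -- basic facts
  have hHleG : Hgraph G (G \ R) ≤ G := fun _ _ h => h.1
  have hHleR : Hgraph G (G \ R) ≤ R := by
    intro a b h
    by_contra hr
    exact h.2 (SimpleGraph.ConnectedComponent.sound (SimpleGraph.Adj.reachable ⟨h.1, hr⟩))
  have ht2 : 2 ≤ t := by omega
  -- cliques in common neighbourhoods across non-edges
  have cliqueAt : ∀ x z : V, x ≠ z → ¬ G.Adj x z →
      ∃ T : Finset V, (Hgraph G (G \ R)).IsNClique (t - 2) T ∧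
        ∀ a ∈ T, (Hgraph G (G \ R)).Adj x a ∧ (Hgraph G (G \ R)).Adj z a := by
    intro x z hxz hnadj
    rcases fail_analysis hR hG hxz hnadj hHleG (s := (∅ : Set V))
        (fun a ha _ _ => absurd ha (Set.notMem_empty a))
        (by
          intro a b hGab hnH
          left
          by_contra hne
          exact hnH ⟨hGab, hne⟩) with ⟨S, hS⟩ | hbad
    · exact extract ht2 hR.2.1 hHleR hxz hS
    · rw [Set.ncard_empty] at hbad
      omega
  have minusAt : ∀ x z : V, x ≠ z → ¬ G.Adj x z →
      (∃ T : Finset V,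
          ((Hgraph G (G \ R)) \ SimpleGraph.fromEdgeSet {s(v, w)}).IsNClique (t - 2) T ∧
          ∀ a ∈ T, ((Hgraph G (G \ R)) \ SimpleGraph.fromEdgeSet {s(v, w)}).Adj x a ∧
            ((Hgraph G (G \ R)) \ SimpleGraph.fromEdgeSet {s(v, w)}).Adj z a)
      ∨ k ≤ (((G \ R).connectedComponentMk v).supp ∪
          ((G \ R).connectedComponentMk w).supp).ncard := by
    intro x z hxz hnadj
    rcases fail_analysis hR hG hxz hnadj (sdiff_le.trans hHleG)
        (s := ((G \ R).connectedComponentMk v).supp ∪ ((G \ R).connectedComponentMk w).supp)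
        (by
          intro a ha b heq
          rcases ha with h | h <;> rw [SimpleGraph.ConnectedComponent.mem_supp_iff] at h
          · exact Or.inl ((SimpleGraph.ConnectedComponent.mem_supp_iff _ _).mpr
              (heq.symm.trans h))
          · exact Or.inr ((SimpleGraph.ConnectedComponent.mem_supp_iff _ _).mpr
              (heq.symm.trans h)))
        (by
          intro a b hGab hnH
          by_cases hH' : (Hgraph G (G \ R)).Adj a b
          · have hfe : (SimpleGraph.fromEdgeSet {s(v, w)}).Adj a b := by
              by_contra hfe
              exact hnH ⟨hH', hfe⟩
            rw [SimpleGraph.fromEdgeSet_adj, Set.mem_singleton_iff] at hfe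
            right
            rcases Sym2.eq_iff.mp hfe.1 with ⟨rfl, rfl⟩ | ⟨rfl, rfl⟩
            · exact ⟨Or.inl ((SimpleGraph.ConnectedComponent.mem_supp_iff _ _).mpr rfl),
                Or.inr ((SimpleGraph.ConnectedComponent.mem_supp_iff _ _).mpr rfl)⟩
            · exact ⟨Or.inr ((SimpleGraph.ConnectedComponent.mem_supp_iff _ _).mpr rfl),
                Or.inl ((SimpleGraph.ConnectedComponent.mem_supp_iff _ _).mpr rfl)⟩
          · left
            by_contra hne
            exact hH' ⟨hGab, hne⟩) with ⟨S, hS⟩ | hbad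
    · exact Or.inl (extract ht2 hR.2.1 (sdiff_le.trans hHleR) hxz hS)
    · exact Or.inr hbad
  by_cases hM : ∃ z, z ≠ u ∧ ¬ G.Adj u z
  · -- u has a non-neighbour in G
    obtain ⟨z₀, hz₀u, hz₀⟩ := hM
    have hMadj : ∀ y, y ≠ u → ¬ G.Adj u y →
        (Hgraph G (G \ R)).Adj y v ∧ (Hgraph G (G \ R)).Adj y w := by
      intro y h1 h2
      obtain ⟨Q, hQcl, hQadj⟩ := cliqueAt u y (Ne.symm h1) h2
      have hQsub : ↑Q ⊆ (Hgraph G (G \ R)).neighborSet u :=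
        fun a ha => (hQadj a (Finset.mem_coe.mp ha)).1
      obtain ⟨hv', hw'⟩ := hcon Q hQsub hQcl
      exact ⟨(hQadj v hv').2, (hQadj w hw').2⟩
    obtain ⟨Q₀, hQ₀cl, hQ₀adj⟩ := cliqueAt u z₀ (Ne.symm hz₀u) hz₀
    have hQ₀sub : ↑Q₀ ⊆ (Hgraph G (G \ R)).neighborSet u :=
      fun a ha => (hQ₀adj a (Finset.mem_coe.mp ha)).1
    obtain ⟨hvQ₀, hwQ₀⟩ := hcon Q₀ hQ₀sub hQ₀cl
    rcases minusAt u z₀ (Ne.symm hz₀u) hz₀ with ⟨T, hTcl, hTadj⟩ | hk2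
    · -- K_t appeared in (H - vw) + uz₀ : gives a clique avoiding the edge vw
      have hTsub : ↑T ⊆ (Hgraph G (G \ R)).neighborSet u :=
        fun a ha => ((hTadj a (Finset.mem_coe.mp ha)).1).1
      have hTH : (Hgraph G (G \ R)).IsNClique (t - 2) T := hTcl.mono sdiff_le
      obtain ⟨hvT, hwT⟩ := hcon T hTsub hTH
      have hadjvw : ((Hgraph G (G \ R)) \ SimpleGraph.fromEdgeSet {s(v, w)}).Adj v w :=
        hTcl.1 (Finset.mem_coe.mpr hvT) (Finset.mem_coe.mpr hwT) hvw.ne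
      exact hadjvw.2 (by
        rw [SimpleGraph.fromEdgeSet_adj]
        exact ⟨rfl, hvw.ne⟩)
    · -- components of v and w are too big : counting contradiction
      have hDsub : ((G \ R).connectedComponentMk v).supp ∪
          ((G \ R).connectedComponentMk w).supp ⊆ (Hgraph G (G \ R)).neighborSet u := by
        intro y hy
        have hyu : y ≠ u := by
          rintro rfl
          rcases hy with h | h <;> rw [SimpleGraph.ConnectedComponent.mem_supp_iff] at h
          · exact huv.2 h
          · exact huw.2 h
        by_cases hGa : G.Adj u y
        · refine (⟨hGa, ?_⟩ : (Hgraph G (G \ R)).Adj u y)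
          rcases hy with h | h <;> rw [SimpleGraph.ConnectedComponent.mem_supp_iff] at h
          · exact fun heq => huv.2 (heq.trans h)
          · exact fun heq => huw.2 (heq.trans h)
        · exfalso
          rcases hy with h | h <;> rw [SimpleGraph.ConnectedComponent.mem_supp_iff] at h
          · exact ((hMadj y hyu hGa).1).2 h
          · exact ((hMadj y hyu hGa).2).2 h
      exact counting hDsub hQ₀sub
        (by
          intro q hq hqv hqw hq_s
          rcases hq_s with h | h <;> rw [SimpleGraph.ConnectedComponent.mem_supp_iff] at h
          · exact (hQ₀cl.1 (Finset.mem_coe.mpr hq) (Finset.mem_coe.mpr hvQ₀) hqv).2 h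
          · exact (hQ₀cl.1 (Finset.mem_coe.mpr hq) (Finset.mem_coe.mpr hwQ₀) hqw).2 h)
        hvQ₀ hwQ₀ hvw.ne hQ₀cl.2 hk2 humin hδsmall ht4 hkt
  · -- u is adjacent in G to all other vertices
    push_neg at hM
    obtain ⟨x, z, hxz, hnadj⟩ := exists_nonedge hG.1
    have hxu : x ≠ u := by
      rintro rfl
      exact hnadj (hM z (Ne.symm hxz))
    have hzu : z ≠ u := by
      rintro rfl
      exact hnadj (hM x hxz).symm
    have hAmem : ∀ y, y ≠ u →
        (G \ R).connectedComponentMk y ≠ (G \ R).connectedComponentMk u →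
        (Hgraph G (G \ R)).Adj u y :=
      fun y h1 h2 => ⟨hM y h1, fun he => h2 he.symm⟩
    obtain ⟨T₀, hT₀cl, hT₀adj⟩ := cliqueAt x z hxz hnadj
    obtain ⟨P₀, hP₀sub, hP₀cl, hP₀prop⟩ := surgery ht4 hxu hzu hAmem le_rfl hT₀cl hT₀adj
    obtain ⟨hvP₀, hwP₀⟩ := hcon P₀ hP₀sub hP₀cl
    rcases minusAt x z hxz hnadj with ⟨T₁, hT₁cl, hT₁adj⟩ | hk2
    · obtain ⟨P₁, hP₁sub, hP₁cl, hP₁prop⟩ := surgery ht4 hxu hzu hAmem sdiff_le hT₁cl hT₁adj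
      obtain ⟨hvP₁, hwP₁⟩ := hcon P₁ hP₁sub hP₁cl
      have hfevw : (SimpleGraph.fromEdgeSet {s(v, w)}).Adj v w := by
        rw [SimpleGraph.fromEdgeSet_adj]
        exact ⟨rfl, hvw.ne⟩
      have hfewv : (SimpleGraph.fromEdgeSet {s(v, w)}).Adj w v := hfevw.symm
      rcases hP₁prop v hvP₁ with hvT | ⟨hvxz, hvadj⟩
      · rcases hP₁prop w hwP₁ with hwT | ⟨hwxz, hwadj⟩
        · exact (hT₁cl.1 (Finset.mem_coe.mpr hvT) (Finset.mem_coe.mpr hwT) hvw.ne).2 hfevw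
        · exact ((hwadj v hvT).2) hfewv
      · rcases hP₁prop w hwP₁ with hwT | ⟨hwxz, hwadj⟩
        · exact ((hvadj w hwT).2) hfevw
        · rcases hvxz with rfl | rfl <;> rcases hwxz with rfl | rfl
          · exact hvw.ne rfl
          · exact hnadj hvw.1
          · exact hnadj hvw.1.symm
          · exact hvw.ne rfl
    · have hDsub : ((G \ R).connectedComponentMk v).supp ∪
          ((G \ R).connectedComponentMk w).supp ⊆ (Hgraph G (G \ R)).neighborSet u := by
        intro y hy
        have h2 : (G \ R).connectedComponentMk y ≠ (G \ R).connectedComponentMk u := by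
          rcases hy with h | h <;> rw [SimpleGraph.ConnectedComponent.mem_supp_iff] at h
          · exact fun heq => huv.2 (heq.symm.trans h)
          · exact fun heq => huw.2 (heq.symm.trans h)
        have h1 : y ≠ u := fun he => h2 (he ▸ rfl)
        exact hAmem y h1 h2
      exact counting hDsub hP₀sub
        (by
          intro q hq hqv hqw hq_s
          rcases hq_s with h | h <;> rw [SimpleGraph.ConnectedComponent.mem_supp_iff] at h
          · exact (hP₀cl.1 (Finset.mem_coe.mpr hq) (Finset.mem_coe.mpr hvP₀) hqv).2 h
          · exact (hP₀cl.1 (Finset.mem_coe.mpr hq) (Finset.mem_coe.mpr hwP₀) hqw).2 h)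
        hvP₀ hwP₀ hvw.ne hP₀cl.2 hk2 humin hδsmall ht4 hkt
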